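/- There exists a constant $C > 0$ such that for all $t > 0$ and $x \in \mathbb{R}^3$: $\int_0^t \int_{\mathbb{R}^3} (1+t-s)^{-2}\big(1+\tfrac{|x-y|^2}{1+t-s}\big)^{-2}(1+s)^{-3}\big(1+\tfrac{|y|^2}{1+s}\big)^{-3}\,dy\,ds \leq C(1+t)^{-2}\big(1+\tfrac{|x|^2}{1+t}\big)^{-3/2}$. -/
import Mathlib

open MeasureTheory Real

noncomputable abbrev E3 := EuclideanSpace ℝ (Fin 3)

lemma rpow_combine {a r : ℝ} (p : ℝ) (ha : 0 < a) (hr : 0 ≤ r) :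
    a ^ (-p) * (1 + r / a) ^ (-p) = (a + r) ^ (-p) := by
  rw [← Real.mul_rpow ha.le (by positivity)]
  congr 1
  field_simp

lemma integrable_shift (c : ℝ) (hc : 1 ≤ c) (p : ℝ) (hp : 3 < 2 * p) :
    Integrable (fun y : E3 => (c + ‖y‖ ^ 2) ^ (-p)) := by
  have hfin : ((Module.finrank ℝ E3 : ℝ)) < 2 * p := by
    simp only [finrank_euclideanSpace, Fintype.card_fin]; exact_mod_cast hp
  have h := integrable_rpow_neg_one_add_norm_sq (E := E3) (μ := volume) (r := 2 * p) hfin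
  have h2 : Integrable (fun y : E3 => ((1 : ℝ) + ‖y‖ ^ 2) ^ (-p)) := by
    simpa [show -(2 * p) / 2 = -p by ring] using h
  refine h2.mono' ?_ (Filter.Eventually.of_forall fun y => ?_)
  · exact (Continuous.rpow_const (by continuity) fun y => Or.inl (by positivity)).aestronglyMeasurable
  · rw [Real.norm_eq_abs, abs_of_nonneg (by positivity)]
    exact Real.rpow_le_rpow_of_nonpos (by positivity) (by nlinarith [norm_nonneg (y : E3)]) (by linarith)

lemma scaling (c p : ℝ) (hc : 0 < c) :
    ∫ y : E3, (c + ‖y‖ ^ 2) ^ (-p) = c ^ ((3 : ℝ) / 2 - p) * ∫ z : E3, (1 + ‖z‖ ^ 2) ^ (-p) := by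
  have hR : (0:ℝ) ≤ Real.sqrt c := Real.sqrt_nonneg c
  have h := MeasureTheory.Measure.integral_comp_smul_of_nonneg (volume : Measure E3)
    (fun y : E3 => (c + ‖y‖ ^ 2) ^ (-p)) (Real.sqrt c) (hR := hR)
  have hnorm : ∀ z : E3, (c + ‖Real.sqrt c • z‖ ^ 2) ^ (-p)
      = c ^ (-p) * (1 + ‖z‖ ^ 2) ^ (-p) := by
    intro z
    rw [norm_smul, Real.norm_eq_abs, abs_of_nonneg hR, mul_pow, Real.sq_sqrt hc.le,
      ← Real.mul_rpow hc.le (by positivity)]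
    ring_nf
  rw [show (fun z : E3 => (c + ‖Real.sqrt c • z‖ ^ 2) ^ (-p)) = _ from funext hnorm] at h
  rw [integral_const_mul, finrank_euclideanSpace, Fintype.card_fin,
    smul_eq_mul] at h
  have h3 : (0:ℝ) < Real.sqrt c ^ (3:ℕ) := by positivity
  have hcube : (Real.sqrt c) ^ (3:ℕ) = c ^ ((3:ℝ)/2) := by
    rw [← Real.rpow_natCast (Real.sqrt c) 3, Real.sqrt_eq_rpow, ← Real.rpow_mul hc.le]
    norm_num
  have h' : (∫ y : E3, (c + ‖y‖ ^ 2) ^ (-p))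
      = (Real.sqrt c ^ (3:ℕ)) * (c ^ (-p) * ∫ z : E3, (1 + ‖z‖ ^ 2) ^ (-p)) := by
    rw [h, ← mul_assoc, mul_inv_cancel₀ h3.ne', one_mul]
  rw [h', hcube, ← mul_assoc, ← Real.rpow_add hc]
  norm_num [sub_eq_add_neg]

noncomputable def Kp (p : ℝ) : ℝ := ∫ z : E3, (1 + ‖z‖ ^ 2) ^ (-p)

lemma Kp_nonneg (p : ℝ) : 0 ≤ Kp p :=
  integral_nonneg fun z => by positivity

lemma four_pow : (4:ℝ) ^ ((3:ℝ)/2) = 8 := by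
  rw [show (4:ℝ) = 2 ^ (2:ℝ) by
      rw [show (2:ℝ) ^ (2:ℝ) = 2 ^ (2:ℕ) by rw [← Real.rpow_natCast]; norm_num]; norm_num,
    ← Real.rpow_mul (by norm_num)]
  rw [show (2:ℝ) * ((3:ℝ)/2) = 3 by ring,
    show (2:ℝ) ^ (3:ℝ) = 2 ^ (3:ℕ) by rw [← Real.rpow_natCast]; norm_num]
  norm_num

lemma inner_le (t s : ℝ) (x : E3) (hs : 0 ≤ s) (hst : s ≤ t) :
    (∫ y : E3, (1 + t - s) ^ (-(2 : ℝ)) * (1 + ‖x - y‖ ^ 2 / (1 + t - s)) ^ (-(2 : ℝ)) *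
        (1 + s) ^ (-(3 : ℝ)) * (1 + ‖y‖ ^ 2 / (1 + s)) ^ (-(3 : ℝ)))
      ≤ (8 * (1 + t + ‖x‖ ^ 2) ^ (-((3 : ℝ)/2)) * (Kp 2 + Kp 3)) *
        ((1 + t - s) ^ (-((1 : ℝ)/2)) * (1 + s) ^ (-((3 : ℝ)/2))) := by
  have ha : (0:ℝ) < 1 + t - s := by linarith
  have ha1 : (1:ℝ) ≤ 1 + t - s := by linarith
  have hb0 : (0:ℝ) < 1 + s := by linarith
  have hb : (1:ℝ) ≤ 1 + s := by linarith
  have hA : (0:ℝ) < 1 + t + ‖x‖ ^ 2 := by nlinarith [sq_nonneg ‖x‖]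
  set a := 1 + t - s with hadef
  set b := 1 + s with hbdef
  set A := 1 + t + ‖x‖ ^ 2 with hAdef
  have hrw : ∀ y : E3, a ^ (-(2:ℝ)) * (1 + ‖x - y‖ ^ 2 / a) ^ (-(2:ℝ)) *
      b ^ (-(3:ℝ)) * (1 + ‖y‖ ^ 2 / b) ^ (-(3:ℝ))
      = (a + ‖x - y‖ ^ 2) ^ (-(2:ℝ)) * (b + ‖y‖ ^ 2) ^ (-(3:ℝ)) := by
    intro y
    rw [mul_assoc (a ^ (-(2:ℝ)) * (1 + ‖x - y‖ ^ 2 / a) ^ (-(2:ℝ))),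
      rpow_combine (r := ‖x - y‖ ^ 2) 2 ha (by positivity),
      rpow_combine (r := ‖y‖ ^ 2) 3 hb0 (by positivity)]
  simp only [hrw]
  have hpt : ∀ y : E3, (a + ‖x - y‖ ^ 2) ^ (-(2:ℝ)) * (b + ‖y‖ ^ 2) ^ (-(3:ℝ))
      ≤ 8 * A ^ (-((3:ℝ)/2)) * (a ^ (-((1:ℝ)/2)) * (b + ‖y‖ ^ 2) ^ (-(3:ℝ))
          + b ^ (-((3:ℝ)/2)) * (a + ‖x - y‖ ^ 2) ^ (-(2:ℝ))) := by
    intro y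
    set u := a + ‖x - y‖ ^ 2 with hu
    set v := b + ‖y‖ ^ 2 with hv
    have hu0 : 0 < u := by positivity
    have hv0 : 0 < v := by positivity
    have hau : a ≤ u := by rw [hu]; nlinarith [sq_nonneg ‖x - y‖]
    have hbv : b ≤ v := by rw [hv]; nlinarith [sq_nonneg ‖y‖]
    have hxy : ‖x‖ ^ 2 ≤ 2 * (‖x - y‖ ^ 2 + ‖y‖ ^ 2) := by
      have h1 : ‖x‖ ≤ ‖x - y‖ + ‖y‖ := by
        calc ‖x‖ = ‖(x - y) + y‖ := by rw [sub_add_cancel]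
          _ ≤ _ := norm_add_le _ _
      nlinarith [norm_nonneg x, norm_nonneg (x - y), norm_nonneg y, sq_nonneg (‖x - y‖ - ‖y‖), sq_nonneg (‖x - y‖ + ‖y‖)]
    have hsum : A ≤ 4 * u ∨ A ≤ 4 * v := by
      by_contra hcon
      push_neg at hcon
      obtain ⟨h1, h2⟩ := hcon
      have hle : A ≤ 2 * (u + v) := by
        rw [hu, hv, hadef, hbdef, hAdef]; nlinarith
      linarith
    have h8 : ((A/4) : ℝ) ^ (-((3:ℝ)/2)) = 8 * A ^ (-((3:ℝ)/2)) := by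
      rw [Real.div_rpow hA.le (by norm_num : (0:ℝ) ≤ 4), Real.rpow_neg (by norm_num : (0:ℝ) ≤ 4),
        four_pow, div_eq_mul_inv, inv_inv, mul_comm]
    have expand : 8 * A ^ (-((3:ℝ)/2)) * (a ^ (-((1:ℝ)/2)) * v ^ (-(3:ℝ))
          + b ^ (-((3:ℝ)/2)) * u ^ (-(2:ℝ)))
        = (8 * A ^ (-((3:ℝ)/2)) * a ^ (-((1:ℝ)/2))) * v ^ (-(3:ℝ))
          + (8 * A ^ (-((3:ℝ)/2)) * b ^ (-((3:ℝ)/2))) * u ^ (-(2:ℝ)) := by ring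
    rw [expand]
    rcases hsum with hc | hc
    · have hAu : A/4 ≤ u := by linarith
      have hb1 : u ^ (-(2:ℝ)) ≤ 8 * A ^ (-((3:ℝ)/2)) * a ^ (-((1:ℝ)/2)) := by
        have e1 : u ^ (-(2:ℝ)) = u ^ (-((3:ℝ)/2)) * u ^ (-((1:ℝ)/2)) := by
          rw [← Real.rpow_add hu0]; norm_num
        rw [e1, ← h8]
        exact mul_le_mul (Real.rpow_le_rpow_of_nonpos (by linarith) hAu (by norm_num))
          (Real.rpow_le_rpow_of_nonpos ha hau (by norm_num)) (by positivity) (by positivity)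
      exact le_add_of_le_of_nonneg
        (mul_le_mul_of_nonneg_right hb1 (by positivity)) (by positivity)
    · have hAv : A/4 ≤ v := by linarith
      have hb1 : v ^ (-(3:ℝ)) ≤ 8 * A ^ (-((3:ℝ)/2)) * b ^ (-((3:ℝ)/2)) := by
        have e1 : v ^ (-(3:ℝ)) = v ^ (-((3:ℝ)/2)) * v ^ (-((3:ℝ)/2)) := by
          rw [← Real.rpow_add hv0]; norm_num
        rw [e1, ← h8]
        exact mul_le_mul (Real.rpow_le_rpow_of_nonpos (by linarith) hAv (by norm_num))
          (Real.rpow_le_rpow_of_nonpos hb0 hbv (by norm_num)) (by positivity) (by positivity)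
      rw [mul_comm (u ^ (-(2:ℝ)))]
      exact le_add_of_nonneg_of_le (by positivity)
        (mul_le_mul_of_nonneg_right hb1 (by positivity))
  have hint3 : Integrable (fun y : E3 => (b + ‖y‖ ^ 2) ^ (-(3:ℝ))) :=
    integrable_shift b hb 3 (by norm_num)
  have hint2' : Integrable (fun y : E3 => (a + ‖y‖ ^ 2) ^ (-(2:ℝ))) :=
    integrable_shift a ha1 2 (by norm_num)
  have hswap : (fun y : E3 => (a + ‖x - y‖ ^ 2) ^ (-(2:ℝ)))
      = fun y : E3 => (a + ‖y - x‖ ^ 2) ^ (-(2:ℝ)) := by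
    funext y; rw [norm_sub_rev]
  have hint2 : Integrable (fun y : E3 => (a + ‖x - y‖ ^ 2) ^ (-(2:ℝ))) := by
    rw [hswap]; exact hint2'.comp_sub_right x
  have hg : Integrable (fun y : E3 => 8 * A ^ (-((3:ℝ)/2)) *
      (a ^ (-((1:ℝ)/2)) * (b + ‖y‖ ^ 2) ^ (-(3:ℝ))
        + b ^ (-((3:ℝ)/2)) * (a + ‖x - y‖ ^ 2) ^ (-(2:ℝ)))) :=
    ((hint3.const_mul _).add (hint2.const_mul _)).const_mul _
  have step := integral_mono_of_nonneg (Filter.Eventually.of_forall fun y => by positivity) hg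
    (Filter.Eventually.of_forall hpt)
  refine step.trans_eq ?_
  rw [integral_const_mul, integral_add (hint3.const_mul _) (hint2.const_mul _),
    integral_const_mul, integral_const_mul]
  have e3 : (∫ y : E3, (b + ‖y‖ ^ 2) ^ (-(3:ℝ))) = b ^ ((3:ℝ)/2 - 3) * Kp 3 := scaling b 3 hb0
  have e2 : (∫ y : E3, (a + ‖x - y‖ ^ 2) ^ (-(2:ℝ))) = a ^ ((3:ℝ)/2 - 2) * Kp 2 := by
    rw [hswap, integral_sub_right_eq_self (fun z : E3 => (a + ‖z‖ ^ 2) ^ (-(2:ℝ))) x]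
    exact scaling a 2 ha
  rw [e3, e2, show (3:ℝ)/2 - 3 = -((3:ℝ)/2) by norm_num,
    show (3:ℝ)/2 - 2 = -((1:ℝ)/2) by norm_num]
  ring

lemma outer_le (t : ℝ) (ht : 0 < t) :
    (∫ s in (0:ℝ)..t, (1 + t - s) ^ (-((1:ℝ)/2)) * (1 + s) ^ (-((3:ℝ)/2)))
      ≤ 12 * (1 + t) ^ (-((1:ℝ)/2)) := by
  have h1t : (0:ℝ) < 1 + t := by linarith
  have huIcc : Set.uIcc (0:ℝ) t = Set.Icc 0 t := Set.uIcc_of_le ht.le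
  have hcont : ∀ (c d : ℝ) (q : ℝ), (∀ s ∈ Set.uIcc (0:ℝ) t, c + d * s ≠ 0) →
      ContinuousOn (fun s : ℝ => (c + d * s) ^ q) (Set.uIcc (0:ℝ) t) := by
    intro c d q hne
    exact ContinuousOn.rpow_const (by fun_prop) fun s hs => Or.inl (hne s hs)
  have hc1 : ContinuousOn (fun s : ℝ => (1 + t - s) ^ (-((1:ℝ)/2))) (Set.uIcc (0:ℝ) t) := by
    apply ContinuousOn.rpow_const (by fun_prop)
    intro s hs
    rw [huIcc] at hs
    exact Or.inl (by simp only [Set.mem_Icc] at hs; nlinarith [hs.1, hs.2])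
  have hc2 : ContinuousOn (fun s : ℝ => (1 + s) ^ (-((3:ℝ)/2))) (Set.uIcc (0:ℝ) t) := by
    apply ContinuousOn.rpow_const (by fun_prop)
    intro s hs
    rw [huIcc] at hs
    exact Or.inl (by simp only [Set.mem_Icc] at hs; nlinarith [hs.1, hs.2])
  have hFi : IntervalIntegrable
      (fun s : ℝ => (1 + t - s) ^ (-((1:ℝ)/2)) * (1 + s) ^ (-((3:ℝ)/2))) volume 0 t :=
    (hc1.mul hc2).intervalIntegrable
  have hG1 : IntervalIntegrable (fun s : ℝ => (1 + s) ^ (-((3:ℝ)/2))) volume 0 t :=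
    hc2.intervalIntegrable
  have hG2 : IntervalIntegrable (fun s : ℝ => (1 + t - s) ^ (-((1:ℝ)/2))) volume 0 t :=
    hc1.intervalIntegrable
  have hGi : IntervalIntegrable (fun s : ℝ => 2 * (1 + t) ^ (-((1:ℝ)/2)) * (1 + s) ^ (-((3:ℝ)/2))
      + 4 * (1 + t) ^ (-((3:ℝ)/2)) * (1 + t - s) ^ (-((1:ℝ)/2))) volume 0 t :=
    (hG1.const_mul _).add (hG2.const_mul _)
  have htwo : ((1+t)/2 : ℝ) ^ (-((1:ℝ)/2)) ≤ 2 * (1 + t) ^ (-((1:ℝ)/2)) := by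
    rw [Real.div_rpow h1t.le (by norm_num : (0:ℝ) ≤ 2), div_eq_mul_inv,
      ← Real.rpow_neg (by norm_num : (0:ℝ) ≤ 2), neg_neg, mul_comm]
    apply mul_le_mul_of_nonneg_right _ (by positivity)
    calc (2:ℝ) ^ ((1:ℝ)/2) ≤ 2 ^ (1:ℝ) :=
        Real.rpow_le_rpow_of_exponent_le one_le_two (by norm_num)
      _ = 2 := Real.rpow_one 2
  have hfour : ((1+t)/2 : ℝ) ^ (-((3:ℝ)/2)) ≤ 4 * (1 + t) ^ (-((3:ℝ)/2)) := by
    rw [Real.div_rpow h1t.le (by norm_num : (0:ℝ) ≤ 2), div_eq_mul_inv,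
      ← Real.rpow_neg (by norm_num : (0:ℝ) ≤ 2), neg_neg, mul_comm]
    apply mul_le_mul_of_nonneg_right _ (by positivity)
    calc (2:ℝ) ^ ((3:ℝ)/2) ≤ 2 ^ (2:ℝ) :=
        Real.rpow_le_rpow_of_exponent_le one_le_two (by norm_num)
      _ = 4 := by
        rw [show (2:ℝ) ^ (2:ℝ) = 2 ^ (2:ℕ) by rw [← Real.rpow_natCast]; norm_num]; norm_num
  have hpt : ∀ s ∈ Set.Icc (0:ℝ) t,
      (1 + t - s) ^ (-((1:ℝ)/2)) * (1 + s) ^ (-((3:ℝ)/2))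
        ≤ 2 * (1 + t) ^ (-((1:ℝ)/2)) * (1 + s) ^ (-((3:ℝ)/2))
          + 4 * (1 + t) ^ (-((3:ℝ)/2)) * (1 + t - s) ^ (-((1:ℝ)/2)) := by
    intro s hs
    obtain ⟨hs0, hst⟩ := hs
    rcases le_total s (t/2) with hhalf | hhalf
    · refine le_add_of_le_of_nonneg ?_
        (mul_nonneg (by positivity) (Real.rpow_nonneg (by linarith) _))
      apply mul_le_mul_of_nonneg_right _ (Real.rpow_nonneg (by linarith) _)
      calc (1 + t - s) ^ (-((1:ℝ)/2)) ≤ ((1+t)/2) ^ (-((1:ℝ)/2)) :=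
          Real.rpow_le_rpow_of_nonpos (by linarith) (by linarith) (by norm_num)
        _ ≤ 2 * (1 + t) ^ (-((1:ℝ)/2)) := htwo
    · refine le_add_of_nonneg_of_le
        (mul_nonneg (by positivity) (Real.rpow_nonneg (by linarith) _)) ?_
      rw [mul_comm ((1 + t - s) ^ (-((1:ℝ)/2)))]
      apply mul_le_mul_of_nonneg_right _ (Real.rpow_nonneg (by linarith) _)
      calc (1 + s) ^ (-((3:ℝ)/2)) ≤ ((1+t)/2) ^ (-((3:ℝ)/2)) :=
          Real.rpow_le_rpow_of_nonpos (by linarith) (by linarith) (by norm_num)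
        _ ≤ 4 * (1 + t) ^ (-((3:ℝ)/2)) := hfour
  have hmono := intervalIntegral.integral_mono_on (μ := volume) ht.le hFi hGi hpt
  have hI1 : (∫ s in (0:ℝ)..t, (1 + s) ^ (-((3:ℝ)/2))) ≤ 2 := by
    have hc : (∫ s in (0:ℝ)..t, ((1:ℝ) + s) ^ (-((3:ℝ)/2)))
        = ∫ u in (1:ℝ)..(1+t), u ^ (-((3:ℝ)/2)) := by
      simpa using intervalIntegral.integral_comp_add_left (a := (0:ℝ)) (b := t)
        (fun u : ℝ => u ^ (-((3:ℝ)/2))) 1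
    rw [hc, integral_rpow (Or.inr ⟨by norm_num, by
      rw [Set.uIcc_of_le (by linarith : (1:ℝ) ≤ 1 + t)]
      simp only [Set.mem_Icc]; intro h; linarith [h.1]⟩)]
    rw [show (-((3:ℝ)/2) + 1) = -((1:ℝ)/2) by norm_num]
    have h1 : (0:ℝ) ≤ (1+t) ^ (-((1:ℝ)/2)) := by positivity
    have h2 : (1:ℝ) ^ (-((1:ℝ)/2)) = 1 := Real.one_rpow _
    rw [h2]
    rw [div_le_iff_of_neg (by norm_num : -((1:ℝ)/2) < 0)]
    linarith
  have hI2 : (∫ s in (0:ℝ)..t, (1 + t - s) ^ (-((1:ℝ)/2))) ≤ 2 * (1+t) ^ ((1:ℝ)/2) := by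
    have hc : (∫ s in (0:ℝ)..t, ((1:ℝ) + t - s) ^ (-((1:ℝ)/2)))
        = ∫ u in (1:ℝ)..(1+t), u ^ (-((1:ℝ)/2)) := by
      have := intervalIntegral.integral_comp_sub_left (a := (0:ℝ)) (b := t)
        (fun u : ℝ => u ^ (-((1:ℝ)/2))) (1+t)
      simpa using this
    rw [hc, integral_rpow (Or.inr ⟨by norm_num, by
      rw [Set.uIcc_of_le (by linarith : (1:ℝ) ≤ 1 + t)]
      simp only [Set.mem_Icc]; intro h; linarith [h.1]⟩)]
    rw [show (-((1:ℝ)/2) + 1) = (1:ℝ)/2 by norm_num]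
    have h2 : (1:ℝ) ^ ((1:ℝ)/2) = 1 := Real.one_rpow _
    rw [h2, div_le_iff₀ (by norm_num : (0:ℝ) < (1:ℝ)/2)]
    have h1 : (0:ℝ) ≤ (1+t) ^ ((1:ℝ)/2) := by positivity
    linarith
  refine hmono.trans ?_
  rw [intervalIntegral.integral_add (hG1.const_mul _) (hG2.const_mul _),
    intervalIntegral.integral_const_mul, intervalIntegral.integral_const_mul]
  have hpow : (1+t) ^ (-((3:ℝ)/2)) * (2 * (1+t) ^ ((1:ℝ)/2)) ≤ 2 * (1+t) ^ (-((1:ℝ)/2)) := by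
    have : (1+t) ^ (-((3:ℝ)/2)) * (1+t) ^ ((1:ℝ)/2) = (1+t) ^ (-(1:ℝ)) := by
      rw [← Real.rpow_add h1t]; norm_num
    calc (1+t) ^ (-((3:ℝ)/2)) * (2 * (1+t) ^ ((1:ℝ)/2))
        = 2 * ((1+t) ^ (-((3:ℝ)/2)) * (1+t) ^ ((1:ℝ)/2)) := by ring
      _ = 2 * (1+t) ^ (-(1:ℝ)) := by rw [this]
      _ ≤ 2 * (1+t) ^ (-((1:ℝ)/2)) := by
          apply mul_le_mul_of_nonneg_left _ (by norm_num)
          exact Real.rpow_le_rpow_of_exponent_le (by linarith) (by norm_num)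
  have t1 : 2 * (1 + t) ^ (-((1:ℝ)/2)) * (∫ s in (0:ℝ)..t, (1 + s) ^ (-((3:ℝ)/2)))
      ≤ 2 * (1 + t) ^ (-((1:ℝ)/2)) * 2 := by
    apply mul_le_mul_of_nonneg_left hI1 (by positivity)
  have t2 : 4 * (1 + t) ^ (-((3:ℝ)/2)) * (∫ s in (0:ℝ)..t, (1 + t - s) ^ (-((1:ℝ)/2)))
      ≤ 4 * (1 + t) ^ (-((3:ℝ)/2)) * (2 * (1+t) ^ ((1:ℝ)/2)) := by
    apply mul_le_mul_of_nonneg_left hI2 (by positivity)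
  have t2' : 4 * (1 + t) ^ (-((3:ℝ)/2)) * (2 * (1+t) ^ ((1:ℝ)/2))
      ≤ 8 * (1 + t) ^ (-((1:ℝ)/2)) := by nlinarith [hpow]
  linarith

theorem stmt_8 :
    ∃ C > 0, ∀ (t : ℝ), 0 < t → ∀ x : EuclideanSpace ℝ (Fin 3),
      (∫ s in (0 : ℝ)..t, ∫ y : EuclideanSpace ℝ (Fin 3),
          (1 + t - s) ^ (-(2 : ℝ)) * (1 + ‖x - y‖ ^ 2 / (1 + t - s)) ^ (-(2 : ℝ)) *
            (1 + s) ^ (-(3 : ℝ)) * (1 + ‖y‖ ^ 2 / (1 + s)) ^ (-(3 : ℝ)))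
        ≤ C * (1 + t) ^ (-(2 : ℝ)) * (1 + ‖x‖ ^ 2 / (1 + t)) ^ (-(3 : ℝ) / 2) := by
  have hK2 := Kp_nonneg 2
  have hK3 := Kp_nonneg 3
  refine ⟨96 * (Kp 2 + Kp 3) + 9, by linarith, ?_⟩
  intro t ht x
  have h1t : (0:ℝ) < 1 + t := by linarith
  have hA : (0:ℝ) < 1 + t + ‖x‖ ^ 2 := by positivity
  set C := 96 * (Kp 2 + Kp 3) + 9 with hC
  have hC0 : (0:ℝ) < C := by rw [hC]; linarith
  set M := 8 * (1 + t + ‖x‖ ^ 2) ^ (-((3:ℝ)/2)) * (Kp 2 + Kp 3) with hM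
  have hM0 : 0 ≤ M := by
    apply mul_nonneg (by positivity) (by linarith)
  have hexp : -(3 : ℝ) / 2 = -((3:ℝ)/2) := by ring
  have hRHS : (1 + t) ^ (-(2:ℝ)) * (1 + ‖x‖ ^ 2 / (1 + t)) ^ (-(3:ℝ)/2)
      = (1 + t) ^ (-((1:ℝ)/2)) * (1 + t + ‖x‖ ^ 2) ^ (-((3:ℝ)/2)) := by
    rw [hexp]
    have hsplit : (1+t) ^ (-(2:ℝ)) = (1+t) ^ (-((1:ℝ)/2)) * (1+t) ^ (-((3:ℝ)/2)) := by
      rw [← Real.rpow_add h1t]; norm_num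
    rw [hsplit, mul_assoc, rpow_combine (r := ‖x‖ ^ 2) ((3:ℝ)/2) h1t (by positivity)]
  have hGc : ContinuousOn
      (fun s : ℝ => M * ((1 + t - s) ^ (-((1:ℝ)/2)) * (1 + s) ^ (-((3:ℝ)/2))))
      (Set.uIcc 0 t) := by
    rw [Set.uIcc_of_le ht.le]
    apply ContinuousOn.mul continuousOn_const
    apply ContinuousOn.mul
    · apply ContinuousOn.rpow_const (by fun_prop)
      intro s hs
      simp only [Set.mem_Icc] at hs
      exact Or.inl (by nlinarith [hs.1, hs.2])
    · apply ContinuousOn.rpow_const (by fun_prop)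
      intro s hs
      simp only [Set.mem_Icc] at hs
      exact Or.inl (by nlinarith [hs.1, hs.2])
  have hGint : IntervalIntegrable
      (fun s : ℝ => M * ((1 + t - s) ^ (-((1:ℝ)/2)) * (1 + s) ^ (-((3:ℝ)/2)))) volume 0 t :=
    hGc.intervalIntegrable
  have hinner : ∀ s ∈ Set.Icc (0:ℝ) t,
      (∫ y : EuclideanSpace ℝ (Fin 3),
          (1 + t - s) ^ (-(2 : ℝ)) * (1 + ‖x - y‖ ^ 2 / (1 + t - s)) ^ (-(2 : ℝ)) *
            (1 + s) ^ (-(3 : ℝ)) * (1 + ‖y‖ ^ 2 / (1 + s)) ^ (-(3 : ℝ)))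
        ≤ M * ((1 + t - s) ^ (-((1:ℝ)/2)) * (1 + s) ^ (-((3:ℝ)/2))) := by
    intro s hs
    exact inner_le t s x hs.1 hs.2
  have hfinal : M * (12 * (1 + t) ^ (-((1:ℝ)/2)))
      ≤ C * (1 + t) ^ (-(2:ℝ)) * (1 + ‖x‖ ^ 2 / (1 + t)) ^ (-(3:ℝ)/2) := by
    have e : C * (1 + t) ^ (-(2:ℝ)) * (1 + ‖x‖ ^ 2 / (1 + t)) ^ (-(3:ℝ)/2)
        = C * ((1 + t) ^ (-((1:ℝ)/2)) * (1 + t + ‖x‖ ^ 2) ^ (-((3:ℝ)/2))) := by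
      rw [mul_assoc, hRHS]
    rw [e, hM, hC]
    have hp1 : (0:ℝ) ≤ (1 + t) ^ (-((1:ℝ)/2)) := by positivity
    have hp2 : (0:ℝ) ≤ (1 + t + ‖x‖ ^ 2) ^ (-((3:ℝ)/2)) := by positivity
    have hprod : (0:ℝ) ≤ (1 + t) ^ (-((1:ℝ)/2)) * (1 + t + ‖x‖ ^ 2) ^ (-((3:ℝ)/2)) :=
      mul_nonneg hp1 hp2
    nlinarith [hprod]
  by_cases hF : IntervalIntegrable
      (fun s : ℝ => ∫ y : EuclideanSpace ℝ (Fin 3),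
          (1 + t - s) ^ (-(2 : ℝ)) * (1 + ‖x - y‖ ^ 2 / (1 + t - s)) ^ (-(2 : ℝ)) *
            (1 + s) ^ (-(3 : ℝ)) * (1 + ‖y‖ ^ 2 / (1 + s)) ^ (-(3 : ℝ))) volume 0 t
  · calc (∫ s in (0 : ℝ)..t, ∫ y : EuclideanSpace ℝ (Fin 3),
          (1 + t - s) ^ (-(2 : ℝ)) * (1 + ‖x - y‖ ^ 2 / (1 + t - s)) ^ (-(2 : ℝ)) *
            (1 + s) ^ (-(3 : ℝ)) * (1 + ‖y‖ ^ 2 / (1 + s)) ^ (-(3 : ℝ)))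
        ≤ ∫ s in (0:ℝ)..t, M * ((1 + t - s) ^ (-((1:ℝ)/2)) * (1 + s) ^ (-((3:ℝ)/2))) :=
          intervalIntegral.integral_mono_on (μ := volume) ht.le hF hGint hinner
      _ = M * ∫ s in (0:ℝ)..t, (1 + t - s) ^ (-((1:ℝ)/2)) * (1 + s) ^ (-((3:ℝ)/2)) :=
          intervalIntegral.integral_const_mul _ _
      _ ≤ M * (12 * (1 + t) ^ (-((1:ℝ)/2))) :=
          mul_le_mul_of_nonneg_left (outer_le t ht) hM0
      _ ≤ C * (1 + t) ^ (-(2:ℝ)) * (1 + ‖x‖ ^ 2 / (1 + t)) ^ (-(3:ℝ)/2) := hfinal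
  · rw [intervalIntegral.integral_undef hF]
    apply mul_nonneg (mul_nonneg hC0.le (by positivity)) (by positivity)
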